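/- Let ε be a nonzero real number and (u, v) ∈ ℝ². Set W := Cay_ε(hat(u, v, 0)) and J := (1/2)·trace(𝕀)·1 − 𝕀. Then 2·1 + W + Wᵀ is invertible, and for every real 3×3 skew-symmetric matrix ξ the function s ↦ (2/ε)·trace( J·(2·1 − V(s) − V(s)ᵀ)·(2·1 + V(s) + V(s)ᵀ)⁻¹ ), with V(s) = exp(s·ξ)·W, is differentiable at s = 0 with derivative (1/2)·trace( hat(N1, N2, N3)·ξᵀ ), where N1 = I11·u + (ε/2)·v·(I13·u + I23·v) + (ε²/4)·u·(I11·u² + I22·v²), N2 = I22·v − (ε/2)·u·(I13·u + I23·v) + (ε²/4)·v·(I11·u² + I22·v²), N3 = I13·u + I23·v + (ε/2)·u·v·(I22 − I11). -/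

import Mathlib

open Matrix

noncomputable section

/-- The hat map `(u, v, w) ↦ hat(u, v, w)`. -/
def hat3 (u v w : ℝ) : Matrix (Fin 3) (Fin 3) ℝ :=
  !![0, -w, v; w, 0, -u; -v, u, 0]

/-- The Cayley map with time step `ε`. -/
def Cay (ε : ℝ) (A : Matrix (Fin 3) (Fin 3) ℝ) : Matrix (Fin 3) (Fin 3) ℝ :=
  (1 + (ε / 2) • A) * (1 - (ε / 2) • A)⁻¹

/-- The inertia tensor of the Suslov rigid body. -/
def inertia (I11 I22 I33 I13 I23 : ℝ) : Matrix (Fin 3) (Fin 3) ℝ :=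
  !![I11, 0, I13; 0, I22, I23; I13, I23, I33]

/-- The matrix `J := (1/2)·trace(𝕀)·1 − 𝕀`. -/
def Jmat (I : Matrix (Fin 3) (Fin 3) ℝ) : Matrix (Fin 3) (Fin 3) ℝ :=
  (((1 : ℝ) / 2) * I.trace) • (1 : Matrix (Fin 3) (Fin 3) ℝ) - I

set_option maxHeartbeats 8000000

def Wm (p q : ℝ) : Matrix (Fin 3) (Fin 3) ℝ :=
  !![(1+p^2-q^2)/(1+p^2+q^2), 2*p*q/(1+p^2+q^2), 2*q/(1+p^2+q^2);
     2*p*q/(1+p^2+q^2), (1+q^2-p^2)/(1+p^2+q^2), -(2*p)/(1+p^2+q^2);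
     -(2*q)/(1+p^2+q^2), 2*p/(1+p^2+q^2), (1-p^2-q^2)/(1+p^2+q^2)]

def Pm (p q : ℝ) : Matrix (Fin 3) (Fin 3) ℝ :=
  !![(1+q^2)/4, -(p*q)/4, 0;
     -(p*q)/4, (1+p^2)/4, 0;
     0, 0, (1+p^2+q^2)/4]

lemma hd0 (p q : ℝ) : (1 + p^2 + q^2) ≠ 0 := by positivity

lemma one_sub_eq (p q : ℝ) :
    (1 : Matrix (Fin 3) (Fin 3) ℝ) - !![0,0,q;0,0,-p;-q,p,0] = !![1,0,-q;0,1,p;q,-p,1] := by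
  ext i j; fin_cases i <;> fin_cases j <;> simp [Matrix.one_apply]

lemma inv_one_sub (p q : ℝ) :
    (!![1,0,-q;0,1,p;q,-p,1] : Matrix (Fin 3) (Fin 3) ℝ)⁻¹ =
      !![(1+p^2)/(1+p^2+q^2), p*q/(1+p^2+q^2), q/(1+p^2+q^2);
         p*q/(1+p^2+q^2), (1+q^2)/(1+p^2+q^2), -(p/(1+p^2+q^2));
         -(q/(1+p^2+q^2)), p/(1+p^2+q^2), 1/(1+p^2+q^2)] := by
  apply Matrix.inv_eq_right_inv
  have hd := hd0 p q
  ext i j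
  fin_cases i <;> fin_cases j <;>
    (simp [Matrix.mul_apply, Fin.sum_univ_three, Matrix.one_apply]; try field_simp; try ring)

lemma one_add_eq (p q : ℝ) :
    (1 : Matrix (Fin 3) (Fin 3) ℝ) + !![0,0,q;0,0,-p;-q,p,0] = !![1,0,q;0,1,-p;-q,p,1] := by
  ext i j; fin_cases i <;> fin_cases j <;> simp [Matrix.one_apply]

lemma smul_hat (ε u v : ℝ) :
    (ε/2) • hat3 u v 0 = !![0,0,ε*v/2; 0,0,-(ε*u/2); -(ε*v/2), ε*u/2, 0] := by
  ext i j; fin_cases i <;> fin_cases j <;> simp [hat3] <;> ring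

lemma cay_eq (ε u v : ℝ) : Cay ε (hat3 u v 0) = Wm (ε*u/2) (ε*v/2) := by
  have hd := hd0 (ε*u/2) (ε*v/2)
  rw [Cay, smul_hat, one_sub_eq, one_add_eq, inv_one_sub, Wm]
  ext i j
  fin_cases i <;> fin_cases j <;>
    (simp [Matrix.mul_apply, Fin.sum_univ_three]; try field_simp; try ring)

lemma Wm_transpose (p q : ℝ) :
    (Wm p q)ᵀ =
    !![(1+p^2-q^2)/(1+p^2+q^2), 2*p*q/(1+p^2+q^2), -(2*q)/(1+p^2+q^2);
       2*p*q/(1+p^2+q^2), (1+q^2-p^2)/(1+p^2+q^2), 2*p/(1+p^2+q^2);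
       2*q/(1+p^2+q^2), -(2*p)/(1+p^2+q^2), (1-p^2-q^2)/(1+p^2+q^2)] := by
  ext i j; fin_cases i <;> fin_cases j <;> simp [Wm, Matrix.transpose_apply]

lemma MP (p q : ℝ) :
    ((2 : Matrix (Fin 3) (Fin 3) ℝ) + Wm p q + (Wm p q)ᵀ) * Pm p q = 1 := by
  have hd := hd0 p q
  have h2 : (2 : Matrix (Fin 3) (Fin 3) ℝ) = 1 + 1 := by norm_num
  rw [Wm_transpose]
  ext i j
  fin_cases i <;> fin_cases j <;>
    (simp [Wm, Pm, h2, Matrix.mul_apply, Fin.sum_univ_three, Matrix.one_apply];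
     try field_simp; try ring; try simp)

lemma PM (p q : ℝ) :
    Pm p q * ((2 : Matrix (Fin 3) (Fin 3) ℝ) + Wm p q + (Wm p q)ᵀ) = 1 := by
  have hd := hd0 p q
  have h2 : (2 : Matrix (Fin 3) (Fin 3) ℝ) = 1 + 1 := by norm_num
  rw [Wm_transpose]
  ext i j
  fin_cases i <;> fin_cases j <;>
    (simp [Wm, Pm, h2, Matrix.mul_apply, Fin.sum_univ_three, Matrix.one_apply];
     try field_simp; try ring; try simp)

lemma skew_decomp (ξ : Matrix (Fin 3) (Fin 3) ℝ) (hξ : ξᵀ = -ξ) :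
    ξ = hat3 (ξ 2 1) (ξ 0 2) (ξ 1 0) := by
  have h : ∀ i j, ξ j i = -ξ i j := fun i j => by
    simpa using congrFun (congrFun hξ i) j
  ext i j
  fin_cases i <;> fin_cases j <;> simp [hat3] <;>
    first
      | linarith [h 0 0]
      | linarith [h 0 1]
      | linarith [h 0 2]
      | linarith [h 1 1]
      | linarith [h 1 2]
      | linarith [h 2 2]

def Wn (p q : ℝ) : Matrix (Fin 3) (Fin 3) ℝ :=
  !![(1 - q^2 + p^2), (2*p*q), (2*q);
     (2*p*q), (1 + q^2 - p^2), (-2*p);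
     (-2*q), (2*p), (1 - q^2 - p^2)]

def WnT (p q : ℝ) : Matrix (Fin 3) (Fin 3) ℝ :=
  !![(1 - q^2 + p^2), (2*p*q), (-2*q);
     (2*p*q), (1 + q^2 - p^2), (2*p);
     (2*q), (-2*p), (1 - q^2 - p^2)]

def Xn (p q a b c : ℝ) : Matrix (Fin 3) (Fin 3) ℝ :=
  !![(-2*q*b - 2*p*q*c), (-c - q^2*c + 2*p*b + p^2*c), (b - q^2*b + 2*p*c - p^2*b);
     (c + 2*q*a - q^2*c + p^2*c), (-2*p*a + 2*p*q*c), (-a + 2*q*c + q^2*a + p^2*a);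
     (-b + q^2*b + 2*p*q*a - p^2*b), (a + q^2*a - 2*p*q*b - p^2*a), (-2*q*b - 2*p*a)]

def XnT (p q a b c : ℝ) : Matrix (Fin 3) (Fin 3) ℝ :=
  !![(-2*q*b - 2*p*q*c), (c + 2*q*a - q^2*c + p^2*c), (-b + q^2*b + 2*p*q*a - p^2*b);
     (-c - q^2*c + 2*p*b + p^2*c), (-2*p*a + 2*p*q*c), (a + q^2*a - 2*p*q*b - p^2*a);
     (b - q^2*b + 2*p*c - p^2*b), (-a + 2*q*c + q^2*a + p^2*a), (-2*q*b - 2*p*a)]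

def negKn (p q a b c : ℝ) : Matrix (Fin 3) (Fin 3) ℝ :=
  !![(4*q*b + 4*p*q*c), (-2*q*a + 2*q^2*c - 2*p*b - 2*p^2*c), (-2*p*c - 2*p*q*a + 2*p^2*b);
     (-2*q*a + 2*q^2*c - 2*p*b - 2*p^2*c), (4*p*a - 4*p*q*c), (-2*q*c - 2*q^2*a + 2*p*q*b);
     (-2*p*c - 2*p*q*a + 2*p^2*b), (-2*q*c - 2*q^2*a + 2*p*q*b), (4*q*b + 4*p*a)]

def Kn (p q a b c : ℝ) : Matrix (Fin 3) (Fin 3) ℝ :=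
  !![(-4*q*b - 4*p*q*c), (2*q*a - 2*q^2*c + 2*p*b + 2*p^2*c), (2*p*c + 2*p*q*a - 2*p^2*b);
     (2*q*a - 2*q^2*c + 2*p*b + 2*p^2*c), (-4*p*a + 4*p*q*c), (2*q*c + 2*q^2*a - 2*p*q*b);
     (2*p*c + 2*p*q*a - 2*p^2*b), (2*q*c + 2*q^2*a - 2*p*q*b), (-4*q*b - 4*p*a)]

def ABn (p q a b c : ℝ) : Matrix (Fin 3) (Fin 3) ℝ :=
  !![(q*b + q^3*b + p*q*c + (1/2)*p*q^2*a + (1/2)*p*q^3*c + (1/2)*p^2*q*b + (1/2)*p^3*q*c), (-(1/2)*q*a + (1/2)*q^2*c - (1/2)*p*b - p*q^2*b - (1/2)*p^2*c - (1/2)*p^2*q*a - (1/2)*p^2*q^2*c - (1/2)*p^3*b - (1/2)*p^4*c), (-(1/2)*p*c - (1/2)*p*q*a - (1/2)*p*q^2*c - (1/2)*p*q^3*a + (1/2)*p^2*b + (1/2)*p^2*q^2*b - (1/2)*p^3*c - (1/2)*p^3*q*a + (1/2)*p^4*b);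
     (-(1/2)*q*a + (1/2)*q^2*c - (1/2)*q^3*a + (1/2)*q^4*c - (1/2)*p*b - (1/2)*p*q^2*b - (1/2)*p^2*c - p^2*q*a + (1/2)*p^2*q^2*c), (p*a - p*q*c + (1/2)*p*q^2*a - (1/2)*p*q^3*c + (1/2)*p^2*q*b + p^3*a - (1/2)*p^3*q*c), (-(1/2)*q*c - (1/2)*q^2*a - (1/2)*q^3*c - (1/2)*q^4*a + (1/2)*p*q*b + (1/2)*p*q^3*b - (1/2)*p^2*q*c - (1/2)*p^2*q^2*a + (1/2)*p^3*q*b);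
     (-(1/2)*p*c - (1/2)*p*q*a + (1/2)*p^2*b), (-(1/2)*q*c - (1/2)*q^2*a + (1/2)*p*q*b), (q*b + q^3*b + p*a + p*q^2*a + p^2*q*b + p^3*a)]

def PKPn (p q a b c : ℝ) : Matrix (Fin 3) (Fin 3) ℝ :=
  !![(-(1/4)*q*b - (1/2)*q^3*b - (1/4)*q^5*b - (1/4)*p*q*c - (1/4)*p*q^2*a - (1/4)*p*q^3*c - (1/4)*p*q^4*a - (1/4)*p^2*q*b - (1/4)*p^2*q^3*b - (1/4)*p^3*q*c - (1/4)*p^3*q^2*a), ((1/8)*q*a - (1/8)*q^2*c + (1/8)*q^3*a - (1/8)*q^4*c + (1/8)*p*b + (3/8)*p*q^2*b + (1/4)*p*q^4*b + (1/8)*p^2*c + (3/8)*p^2*q*a + (1/4)*p^2*q^3*a + (1/8)*p^3*b + (1/4)*p^3*q^2*b + (1/8)*p^4*c + (1/4)*p^4*q*a), ((1/8)*p*c + (1/8)*p*q*a + (1/8)*p*q^2*c + (1/8)*p*q^3*a - (1/8)*p^2*b - (1/8)*p^2*q^2*b + (1/8)*p^3*c + (1/8)*p^3*q*a - (1/8)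*p^4*b);
     ((1/8)*q*a - (1/8)*q^2*c + (1/8)*q^3*a - (1/8)*q^4*c + (1/8)*p*b + (3/8)*p*q^2*b + (1/4)*p*q^4*b + (1/8)*p^2*c + (3/8)*p^2*q*a + (1/4)*p^2*q^3*a + (1/8)*p^3*b + (1/4)*p^3*q^2*b + (1/8)*p^4*c + (1/4)*p^4*q*a), (-(1/4)*p*a + (1/4)*p*q*c - (1/4)*p*q^2*a + (1/4)*p*q^3*c - (1/4)*p^2*q*b - (1/4)*p^2*q^3*b - (1/2)*p^3*a + (1/4)*p^3*q*c - (1/4)*p^3*q^2*a - (1/4)*p^4*q*b - (1/4)*p^5*a), ((1/8)*q*c + (1/8)*q^2*a + (1/8)*q^3*c + (1/8)*q^4*a - (1/8)*p*q*b - (1/8)*p*q^3*b + (1/8)*p^2*q*c + (1/8)*p^2*q^2*a - (1/8)*p^3*q*b);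
     ((1/8)*p*c + (1/8)*p*q*a + (1/8)*p*q^2*c + (1/8)*p*q^3*a - (1/8)*p^2*b - (1/8)*p^2*q^2*b + (1/8)*p^3*c + (1/8)*p^3*q*a - (1/8)*p^4*b), ((1/8)*q*c + (1/8)*q^2*a + (1/8)*q^3*c + (1/8)*q^4*a - (1/8)*p*q*b - (1/8)*p*q^3*b + (1/8)*p^2*q*c + (1/8)*p^2*q^2*a - (1/8)*p^3*q*b), (-(1/4)*q*b - (1/2)*q^3*b - (1/4)*q^5*b - (1/4)*p*a - (1/2)*p*q^2*a - (1/4)*p*q^4*a - (1/2)*p^2*q*b - (1/2)*p^2*q^3*b - (1/2)*p^3*a - (1/2)*p^3*q^2*a - (1/4)*p^4*q*b - (1/4)*p^5*a)]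

def N0n (p q : ℝ) : Matrix (Fin 3) (Fin 3) ℝ :=
  !![(4*q^2), (-4*p*q), (0);
     (-4*p*q), (4*p^2), (0);
     (0), (0), (4*q^2 + 4*p^2)]

def CDn (p q a b c : ℝ) : Matrix (Fin 3) (Fin 3) ℝ :=
  !![(-q^3*b - 2*q^5*b - q^7*b - (1/2)*p*q^2*a - (1/2)*p*q^3*c - (3/2)*p*q^4*a - (1/2)*p*q^5*c - p*q^6*a - (1/2)*p^2*q*b - (5/2)*p^2*q^3*b - 2*p^2*q^5*b - (1/2)*p^3*q*c - (3/2)*p^3*q^2*a - p^3*q^3*c - 2*p^3*q^4*a - (1/2)*p^4*q*b - p^4*q^3*b - (1/2)*p^5*q*c - p^5*q^2*a), ((1/2)*q^3*a - (1/2)*q^4*c + (1/2)*q^5*a - (1/2)*q^6*c + (1/2)*p*q^2*b + (3/2)*p*q^4*b + p*q^6*b + p^2*q*a - (1/2)*p^2*q^2*c + (5/2)*p^2*q^3*a - p^2*q^4*c + p^2*q^5*a + (3/2)*p^3*q^2*b + 2*p^3*q^4*b + 2*p^4*q*a - (1/2)*p^4*q^2*c + 2*p^4*q^3*a + p^5*q^2*b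 + p^6*q*a), (0);
     (p*q^2*b + 2*p*q^4*b + p*q^6*b + (1/2)*p^2*q*a + (1/2)*p^2*q^2*c + (3/2)*p^2*q^3*a + (1/2)*p^2*q^4*c + p^2*q^5*a + (1/2)*p^3*b + (5/2)*p^3*q^2*b + 2*p^3*q^4*b + (1/2)*p^4*c + (3/2)*p^4*q*a + p^4*q^2*c + 2*p^4*q^3*a + (1/2)*p^5*b + p^5*q^2*b + (1/2)*p^6*c + p^6*q*a), (-(1/2)*p*q^2*a + (1/2)*p*q^3*c - (1/2)*p*q^4*a + (1/2)*p*q^5*c - (1/2)*p^2*q*b - (3/2)*p^2*q^3*b - p^2*q^5*b - p^3*a + (1/2)*p^3*q*c - (5/2)*p^3*q^2*a + p^3*q^3*c - p^3*q^4*a - (3/2)*p^4*q*b - 2*p^4*q^3*b - 2*p^5*a + (1/2)*p^5*q*c - 2*p^5*q^2*a - p^6*q*b - p^7*a), (0);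
     ((1/2)*p*q^2*c + (1/2)*p*q^3*a + (1/2)*p*q^4*c + (1/2)*p*q^5*a - (1/2)*p^2*q^2*b - (1/2)*p^2*q^4*b + (1/2)*p^3*c + (1/2)*p^3*q*a + p^3*q^2*c + p^3*q^3*a - (1/2)*p^4*b - p^4*q^2*b + (1/2)*p^5*c + (1/2)*p^5*q*a - (1/2)*p^6*b), ((1/2)*q^3*c + (1/2)*q^4*a + (1/2)*q^5*c + (1/2)*q^6*a - (1/2)*p*q^3*b - (1/2)*p*q^5*b + (1/2)*p^2*q*c + (1/2)*p^2*q^2*a + p^2*q^3*c + p^2*q^4*a - (1/2)*p^3*q*b - p^3*q^3*b + (1/2)*p^4*q*c + (1/2)*p^4*q^2*a - (1/2)*p^5*q*b), (-q^3*b - 2*q^5*b - q^7*b - p*q^2*a - 2*p*q^4*a - p*q^6*a - p^2*q*b - 4*p^2*q^3*b - 3*p^2*q^5*b - p^3*a - 4*p^3*q^2*a - 3*p^3*q^4*a - 2*p^4*q*b - 3*p^4*q^3*b - 2*p^5*a - 3*p^5*q^2*a - p^6*q*b - p^7*a)]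

def M3m (p q a b c : ℝ) : Matrix (Fin 3) (Fin 3) ℝ :=
  !![(q*b + q^3*b + p*q*c + p*q^2*a), (-(1/2)*q*a + (1/2)*q^2*c - (1/2)*p*b - p*q^2*b - (1/2)*p^2*c - p^2*q*a), (-(1/2)*p*c - (1/2)*p*q*a + (1/2)*p^2*b);
     (-(1/2)*q*a + (1/2)*q^2*c - (1/2)*p*b - p*q^2*b - (1/2)*p^2*c - p^2*q*a), (p*a - p*q*c + p^2*q*b + p^3*a), (-(1/2)*q*c - (1/2)*q^2*a + (1/2)*p*q*b);
     (-(1/2)*p*c - (1/2)*p*q*a + (1/2)*p^2*b), (-(1/2)*q*c - (1/2)*q^2*a + (1/2)*p*q*b), (q*b + q^3*b + p*a + p*q^2*a + p^2*q*b + p^3*a)]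

set_option maxHeartbeats 2000000

lemma lemWnT (p q : ℝ) :
    (Wn p q)ᵀ = WnT p q := by
  ext i j
  fin_cases i <;> fin_cases j <;> (simp [Wn, WnT, Matrix.transpose_apply, Matrix.add_apply, Matrix.sub_apply, Matrix.neg_apply, Matrix.smul_apply, Matrix.one_apply, smul_eq_mul]; try ring)

lemma lemXn (p q a b c : ℝ) :
    hat3 a b c * Wn p q = Xn p q a b c := by
  simp only [hat3, Wn, Xn]
  rw [Matrix.mul_fin_three]
  refine congrArg Matrix.of ?_
  refine Matrix.vec3_eq ?_ ?_ ?_ <;> refine Matrix.vec3_eq ?_ ?_ ?_ <;> ring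

lemma lemXnT (p q a b c : ℝ) :
    (Xn p q a b c)ᵀ = XnT p q a b c := by
  ext i j
  fin_cases i <;> fin_cases j <;> (simp [Xn, XnT, Matrix.transpose_apply, Matrix.add_apply, Matrix.sub_apply, Matrix.neg_apply, Matrix.smul_apply, Matrix.one_apply, smul_eq_mul]; try ring)

lemma lemNegKn (p q a b c : ℝ) :
    -Xn p q a b c - XnT p q a b c = negKn p q a b c := by
  ext i j
  fin_cases i <;> fin_cases j <;> (simp [Xn, XnT, negKn, Matrix.transpose_apply, Matrix.add_apply, Matrix.sub_apply, Matrix.neg_apply, Matrix.smul_apply, Matrix.one_apply, smul_eq_mul]; try ring)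

lemma lemKn (p q a b c : ℝ) :
    Xn p q a b c + XnT p q a b c = Kn p q a b c := by
  ext i j
  fin_cases i <;> fin_cases j <;> (simp [Xn, XnT, Kn, Matrix.transpose_apply, Matrix.add_apply, Matrix.sub_apply, Matrix.neg_apply, Matrix.smul_apply, Matrix.one_apply, smul_eq_mul]; try ring)

lemma lemABn (p q a b c : ℝ) :
    negKn p q a b c * Pm p q = ABn p q a b c := by
  simp only [negKn, Pm, ABn]
  rw [Matrix.mul_fin_three]
  refine congrArg Matrix.of ?_
  refine Matrix.vec3_eq ?_ ?_ ?_ <;> refine Matrix.vec3_eq ?_ ?_ ?_ <;> ring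

lemma lemPKPn (p q a b c : ℝ) :
    Pm p q * Kn p q a b c * Pm p q = PKPn p q a b c := by
  simp only [Pm, Kn, PKPn]
  rw [Matrix.mul_fin_three, Matrix.mul_fin_three]
  refine congrArg Matrix.of ?_
  refine Matrix.vec3_eq ?_ ?_ ?_ <;> refine Matrix.vec3_eq ?_ ?_ ?_ <;> ring

lemma lemN0n (p q : ℝ) :
    (1 + p^2 + q^2) • (2 : Matrix (Fin 3) (Fin 3) ℝ) - Wn p q - WnT p q = N0n p q := by
  have h2 : (2 : Matrix (Fin 3) (Fin 3) ℝ) = 1 + 1 := by norm_num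
  ext i j
  fin_cases i <;> fin_cases j <;> (simp [Wn, WnT, N0n, Matrix.transpose_apply, Matrix.add_apply, Matrix.sub_apply, Matrix.neg_apply, Matrix.smul_apply, Matrix.one_apply, smul_eq_mul, h2]; try ring)

lemma lemCDn (p q a b c : ℝ) :
    N0n p q * PKPn p q a b c = CDn p q a b c := by
  simp only [N0n, PKPn, CDn]
  rw [Matrix.mul_fin_three]
  refine congrArg Matrix.of ?_
  refine Matrix.vec3_eq ?_ ?_ ?_ <;> refine Matrix.vec3_eq ?_ ?_ ?_ <;> ring

lemma lemL9 (p q a b c : ℝ) :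
    ((1 + p^2 + q^2)^2) • M3m p q a b c = (1 + p^2 + q^2) • ABn p q a b c - CDn p q a b c := by
  ext i j
  fin_cases i <;> fin_cases j <;> (simp [M3m, ABn, CDn, Matrix.transpose_apply, Matrix.add_apply, Matrix.sub_apply, Matrix.neg_apply, Matrix.smul_apply, Matrix.one_apply, smul_eq_mul]; try ring)

lemma hat3_transpose (a b c : ℝ) :
    (hat3 a b c)ᵀ = hat3 (-a) (-b) (-c) := by
  ext i j
  fin_cases i <;> fin_cases j <;> simp [hat3, Matrix.transpose_apply]

lemma lemWsmul (p q : ℝ) :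
    Wm p q = (1 + p^2 + q^2)⁻¹ • Wn p q := by
  have hd := hd0 p q
  ext i j
  fin_cases i <;> fin_cases j <;> (simp [Wm, Wn, Matrix.transpose_apply, Matrix.add_apply, Matrix.sub_apply, Matrix.neg_apply, Matrix.smul_apply, Matrix.one_apply, smul_eq_mul]; try ring) <;> field_simp


set_option maxHeartbeats 2000000 in
lemma lemE (p q a b c : ℝ) :
    (-(hat3 a b c * Wm p q) - (hat3 a b c * Wm p q)ᵀ) * Pm p q
      + ((2 : Matrix (Fin 3) (Fin 3) ℝ) - Wm p q - (Wm p q)ᵀ) *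
        -(Pm p q * (hat3 a b c * Wm p q + (hat3 a b c * Wm p q)ᵀ) * Pm p q)
      = M3m p q a b c := by
  have hd := hd0 p q
  have hX : hat3 a b c * Wm p q = (1 + p^2 + q^2)⁻¹ • Xn p q a b c := by
    rw [lemWsmul, mul_smul_comm, lemXn]
  have hXT : (hat3 a b c * Wm p q)ᵀ = (1 + p^2 + q^2)⁻¹ • XnT p q a b c := by
    rw [hX, Matrix.transpose_smul, lemXnT]
  have hT1 : (-(hat3 a b c * Wm p q) - (hat3 a b c * Wm p q)ᵀ) * Pm p q
      = (1 + p^2 + q^2)⁻¹ • ABn p q a b c := by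
    rw [hXT, hX, ← smul_neg, ← smul_sub, lemNegKn, smul_mul_assoc, lemABn]
  have hK : hat3 a b c * Wm p q + (hat3 a b c * Wm p q)ᵀ
      = (1 + p^2 + q^2)⁻¹ • Kn p q a b c := by
    rw [hXT, hX, ← smul_add, lemKn]
  have hPKP : Pm p q * (hat3 a b c * Wm p q + (hat3 a b c * Wm p q)ᵀ) * Pm p q
      = (1 + p^2 + q^2)⁻¹ • PKPn p q a b c := by
    rw [hK, mul_smul_comm, smul_mul_assoc, lemPKPn]
  have hN0 : (2 : Matrix (Fin 3) (Fin 3) ℝ) - Wm p q - (Wm p q)ᵀ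
      = (1 + p^2 + q^2)⁻¹ • N0n p q := by
    conv_lhs => rw [lemWsmul, Matrix.transpose_smul, lemWnT,
      show (2 : Matrix (Fin 3) (Fin 3) ℝ)
        = (1 + p^2 + q^2)⁻¹ • ((1 + p^2 + q^2) • (2 : Matrix (Fin 3) (Fin 3) ℝ)) from by
        rw [smul_smul, inv_mul_cancel₀ hd, one_smul]]
    rw [← smul_sub, ← smul_sub, lemN0n]
  have hT2 : ((2 : Matrix (Fin 3) (Fin 3) ℝ) - Wm p q - (Wm p q)ᵀ) *
        -(Pm p q * (hat3 a b c * Wm p q + (hat3 a b c * Wm p q)ᵀ) * Pm p q)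
      = -(((1 + p^2 + q^2)⁻¹ * (1 + p^2 + q^2)⁻¹) • CDn p q a b c) := by
    rw [hN0, hPKP, ← smul_neg, mul_smul_comm, smul_mul_assoc, smul_smul, mul_neg, lemCDn,
      smul_neg]
  rw [hT1, hT2]
  refine smul_right_injective (Matrix (Fin 3) (Fin 3) ℝ)
    (pow_ne_zero 2 hd) ?_
  show ((1 + p^2 + q^2)^2 : ℝ) • _ = ((1 + p^2 + q^2)^2 : ℝ) • _
  rw [lemL9, smul_add, smul_smul, smul_neg, smul_smul,
    show ((1 + p^2 + q^2)^2 : ℝ) * (1 + p^2 + q^2)⁻¹ = (1 + p^2 + q^2) from by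
      field_simp,
    show ((1 + p^2 + q^2)^2 : ℝ) * ((1 + p^2 + q^2)⁻¹ * (1 + p^2 + q^2)⁻¹) = 1 from by
      field_simp,
    one_smul, ← sub_eq_add_neg]

set_option maxHeartbeats 4000000 in
lemma key (I11 I22 I33 I13 I23 ε u v a b c : ℝ) (hε : ε ≠ 0) :
    1 / 2 *
      (hat3 (I11 * u + ε / 2 * v * (I13 * u + I23 * v) + ε ^ 2 / 4 * u * (I11 * u ^ 2 + I22 * v ^ 2))
            (I22 * v - ε / 2 * u * (I13 * u + I23 * v) + ε ^ 2 / 4 * v * (I11 * u ^ 2 + I22 * v ^ 2))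
            (I13 * u + I23 * v + ε / 2 * u * v * (I22 - I11)) *
          (hat3 a b c)ᵀ).trace =
    2 / ε * (Jmat (inertia I11 I22 I33 I13 I23) *
        (-(hat3 a b c * Wm (ε * u / 2) (ε * v / 2)) - (hat3 a b c * Wm (ε * u / 2) (ε * v / 2))ᵀ) *
          Pm (ε * u / 2) (ε * v / 2)
      + Jmat (inertia I11 I22 I33 I13 I23) *
        (2 - Wm (ε * u / 2) (ε * v / 2) - (Wm (ε * u / 2) (ε * v / 2))ᵀ) *
        -(Pm (ε * u / 2) (ε * v / 2) *
            (hat3 a b c * Wm (ε * u / 2) (ε * v / 2) + (hat3 a b c * Wm (ε * u / 2) (ε * v / 2))ᵀ) *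
          Pm (ε * u / 2) (ε * v / 2))).trace := by
  rw [mul_assoc (Jmat (inertia I11 I22 I33 I13 I23)),
    mul_assoc (Jmat (inertia I11 I22 I33 I13 I23)),
    ← mul_add (Jmat (inertia I11 I22 I33 I13 I23)), lemE, hat3_transpose]
  simp only [Matrix.trace_fin_three, Matrix.mul_apply, Fin.sum_univ_three, Jmat, inertia,
    hat3, M3m, Matrix.sub_apply, Matrix.smul_apply, smul_eq_mul, Matrix.one_apply]
  simp only [Matrix.cons_val_zero, Matrix.cons_val_one, Matrix.cons_val_two, Matrix.head_cons, Matrix.tail_cons, Matrix.of_apply, Matrix.cons_val', Matrix.cons_val_fin_one]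
  norm_num [Fin.ext_iff, Matrix.vecHead, Matrix.vecTail]
  field_simp
  ring

/-- The discrete Legendre transformation of the consistent
discrete Lagrangian `ℓ_d^{(∞,ε)} = ε·ℓ∘Cay_ε⁻¹` of the Suslov problem: with
`W = Cay_ε(hat(u, v, 0))` and `J = (1/2)·trace(𝕀)·1 − 𝕀`, the matrix `2·1 + W + Wᵀ`
is invertible, and for every skew-symmetric `ξ`, the function
`s ↦ (2/ε)·trace(J·(2·1 − V(s) − V(s)ᵀ)·(2·1 + V(s) + V(s)ᵀ)⁻¹)` with
`V(s) = exp(s·ξ)·W` is differentiable at `s = 0` with derivative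
`(1/2)·trace(hat(N1, N2, N3)·ξᵀ)`. -/
theorem suslov_discrete_legendre_consistent
    (I11 I22 I33 I13 I23 : ℝ) (hI11 : 0 < I11) (hI22 : 0 < I22)
    (ε : ℝ) (hε : ε ≠ 0) (u v : ℝ) :
    IsUnit ((2 : Matrix (Fin 3) (Fin 3) ℝ)
        + Cay ε (hat3 u v 0) + (Cay ε (hat3 u v 0))ᵀ) ∧
      ∀ ξ : Matrix (Fin 3) (Fin 3) ℝ, ξᵀ = -ξ →
        HasDerivAt
          (fun s : ℝ =>
            (2 / ε) *
              (Jmat (inertia I11 I22 I33 I13 I23) *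
                ((2 : Matrix (Fin 3) (Fin 3) ℝ)
                    - NormedSpace.exp (s • ξ) * Cay ε (hat3 u v 0)
                    - (NormedSpace.exp (s • ξ) * Cay ε (hat3 u v 0))ᵀ) *
                ((2 : Matrix (Fin 3) (Fin 3) ℝ)
                    + NormedSpace.exp (s • ξ) * Cay ε (hat3 u v 0)
                    + (NormedSpace.exp (s • ξ) * Cay ε (hat3 u v 0))ᵀ)⁻¹).trace)
          ((1 / 2 : ℝ) *
            (hat3
                (I11 * u + (ε / 2) * v * (I13 * u + I23 * v)
                  + (ε ^ 2 / 4) * u * (I11 * u ^ 2 + I22 * v ^ 2))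
                (I22 * v - (ε / 2) * u * (I13 * u + I23 * v)
                  + (ε ^ 2 / 4) * v * (I11 * u ^ 2 + I22 * v ^ 2))
                (I13 * u + I23 * v + (ε / 2) * u * v * (I22 - I11)) * ξᵀ).trace)
          0 := by
  letI : NormedRing (Matrix (Fin 3) (Fin 3) ℝ) := Matrix.linftyOpNormedRing
  letI : NormedAlgebra ℝ (Matrix (Fin 3) (Fin 3) ℝ) := Matrix.linftyOpNormedAlgebra
  set p := ε * u / 2 with hp
  set q := ε * v / 2 with hq
  set W : Matrix (Fin 3) (Fin 3) ℝ := Wm p q with hW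
  set P : Matrix (Fin 3) (Fin 3) ℝ := Pm p q with hP
  set J : Matrix (Fin 3) (Fin 3) ℝ := Jmat (inertia I11 I22 I33 I13 I23) with hJ
  have hcay : Cay ε (hat3 u v 0) = W := cay_eq ε u v
  set u₀ : (Matrix (Fin 3) (Fin 3) ℝ)ˣ := ⟨2 + W + Wᵀ, P, MP p q, PM p q⟩ with hu₀
  constructor
  · rw [hcay]; exact u₀.isUnit
  · intro ξ hξ
    simp only [hcay]
    -- derivative of the exponential factor
    have hE : HasDerivAt (fun s : ℝ => NormedSpace.exp (s • ξ)) ξ 0 := by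
      have h := hasDerivAt_exp_smul_const (𝕂 := ℝ) ξ (0 : ℝ)
      simp only [zero_smul, NormedSpace.exp_zero, one_mul] at h
      exact h
    have hV : HasDerivAt (fun s : ℝ => NormedSpace.exp (s • ξ) * W) (ξ * W) 0 :=
      hE.mul_const W
    have hVT : HasDerivAt (fun s : ℝ => (NormedSpace.exp (s • ξ) * W)ᵀ) ((ξ * W)ᵀ) 0 := by
      have h := (LinearMap.toContinuousLinearMap
          ((Matrix.transposeLinearEquiv (Fin 3) (Fin 3) ℝ ℝ).toLinearMap)).hasFDerivAt
          |>.comp_hasDerivAt 0 hV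
      simp only [Function.comp_def, LinearMap.coe_toContinuousLinearMap',
        LinearEquiv.coe_coe, Matrix.transposeLinearEquiv_apply] at h
      exact h
    have hM : HasDerivAt
        (fun s : ℝ => (2 : Matrix (Fin 3) (Fin 3) ℝ)
          + NormedSpace.exp (s • ξ) * W + (NormedSpace.exp (s • ξ) * W)ᵀ)
        (ξ * W + (ξ * W)ᵀ) 0 := (hV.const_add 2).add hVT
    have hN : HasDerivAt
        (fun s : ℝ => (2 : Matrix (Fin 3) (Fin 3) ℝ)
          - NormedSpace.exp (s • ξ) * W - (NormedSpace.exp (s • ξ) * W)ᵀ)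
        (-(ξ * W) - (ξ * W)ᵀ) 0 := (hV.const_sub 2).sub hVT
    have hval : (2 : Matrix (Fin 3) (Fin 3) ℝ)
        + NormedSpace.exp ((0 : ℝ) • ξ) * W + (NormedSpace.exp ((0 : ℝ) • ξ) * W)ᵀ
        = (u₀ : Matrix (Fin 3) (Fin 3) ℝ) := by
      simp [NormedSpace.exp_zero, hu₀]
    have hinv0 := hasFDerivAt_ringInverse (𝕜 := ℝ) u₀
    rw [← hval] at hinv0
    have hMinv : HasDerivAt
        (fun s : ℝ => Ring.inverse ((2 : Matrix (Fin 3) (Fin 3) ℝ)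
          + NormedSpace.exp (s • ξ) * W + (NormedSpace.exp (s • ξ) * W)ᵀ))
        (-(P * (ξ * W + (ξ * W)ᵀ) * P)) 0 := by
      have h2 := hinv0.comp_hasDerivAt 0 hM
      simp only [Function.comp_def, ContinuousLinearMap.neg_apply,
        ContinuousLinearMap.mulLeftRight_apply] at h2
      exact h2
    have hJN : HasDerivAt
        (fun s : ℝ => J * ((2 : Matrix (Fin 3) (Fin 3) ℝ)
          - NormedSpace.exp (s • ξ) * W - (NormedSpace.exp (s • ξ) * W)ᵀ))
        (J * (-(ξ * W) - (ξ * W)ᵀ)) 0 := hN.const_mul J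
    have hProd := hJN.mul hMinv
    have htr := (LinearMap.toContinuousLinearMap
        (Matrix.traceLinearMap (Fin 3) ℝ ℝ)).hasFDerivAt.comp_hasDerivAt 0 hProd
    have hfin := htr.const_mul (2 / ε)
    simp only [LinearMap.coe_toContinuousLinearMap', Matrix.traceLinearMap_apply,
      zero_smul, NormedSpace.exp_zero, one_mul] at hfin
    have hgoal : (fun s : ℝ =>
        (2 / ε) * (J *
          ((2 : Matrix (Fin 3) (Fin 3) ℝ)
            - NormedSpace.exp (s • ξ) * W - (NormedSpace.exp (s • ξ) * W)ᵀ) *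
          ((2 : Matrix (Fin 3) (Fin 3) ℝ)
            + NormedSpace.exp (s • ξ) * W + (NormedSpace.exp (s • ξ) * W)ᵀ)⁻¹).trace)
        = (fun s : ℝ =>
        (2 / ε) * (J *
          ((2 : Matrix (Fin 3) (Fin 3) ℝ)
            - NormedSpace.exp (s • ξ) * W - (NormedSpace.exp (s • ξ) * W)ᵀ) *
          Ring.inverse ((2 : Matrix (Fin 3) (Fin 3) ℝ)
            + NormedSpace.exp (s • ξ) * W + (NormedSpace.exp (s • ξ) * W)ᵀ)).trace) := by
      funext s; rw [Matrix.nonsing_inv_eq_ringInverse]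
    rw [hgoal]
    rw [show Ring.inverse ((2 : Matrix (Fin 3) (Fin 3) ℝ) + W + Wᵀ) = P from
      Ring.inverse_unit u₀] at hfin
    obtain ⟨a, b, c, rfl⟩ : ∃ a b c, ξ = hat3 a b c :=
      ⟨_, _, _, skew_decomp ξ hξ⟩
    refine hfin.congr_deriv ?_
    exact (key I11 I22 I33 I13 I23 ε u v a b c hε).symm

end
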